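/- Each reduced signed series-parallel graph of depth at most 2 is switching equivalent to a string. -/

import Mathlib

/-!
Signed multigraphs (parallel edges allowed), two-terminal graphs,
series/parallel connections and flows, following the terminology of
Kaiser–Rollová, "Nowhere-zero flows in signed series-parallel graphs".

Vertices and edges are labelled by natural numbers.  An edge `e` has the
two endvertices `fst e` and `snd e` (its two half-edges are the ends at
`fst e` and at `snd e`), and `sign e = true` means that `e` is positive.
-/

/-- The value `+1` (pointing towards its endvertex) or `-1` (pointing away)
of a Boolean direction of a half-edge. -/
def dirVal (b : Bool) : ℤ := if b then 1 else -1

/-- A signed multigraph. -/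
structure SignedGraph where
  verts : Finset ℕ
  edges : Finset ℕ
  fst : ℕ → ℕ
  snd : ℕ → ℕ
  sign : ℕ → Bool
  fst_mem : ∀ e ∈ edges, fst e ∈ verts
  snd_mem : ∀ e ∈ edges, snd e ∈ verts

namespace SignedGraph

/-- Edge `e` joins the vertices `u` and `v`. -/
def Joins (G : SignedGraph) (e u v : ℕ) : Prop :=
  (G.fst e = u ∧ G.snd e = v) ∨ (G.fst e = v ∧ G.snd e = u)

/-- `u` and `v` are adjacent (joined by some edge). -/
def Adj (G : SignedGraph) (u v : ℕ) : Prop := ∃ e ∈ G.edges, G.Joins e u v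

/-- The degree of a vertex (each incidence of an edge counts once,
so loops count twice). -/
def degree (G : SignedGraph) (v : ℕ) : ℕ :=
  ∑ e ∈ G.edges, ((if G.fst e = v then 1 else 0) + (if G.snd e = v then 1 else 0))

/-- `e` and `f` are parallel edges: distinct edges joining the same
pair of vertices. -/
def Parallel (G : SignedGraph) (e f : ℕ) : Prop :=
  e ≠ f ∧ ((G.fst e = G.fst f ∧ G.snd e = G.snd f) ∨
           (G.fst e = G.snd f ∧ G.snd e = G.fst f))

/-- `v` is contained in a 2-cycle (a cycle formed by two parallel edges). -/
def In2Cycle (G : SignedGraph) (v : ℕ) : Prop :=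
  ∃ e ∈ G.edges, ∃ f ∈ G.edges, G.Parallel e f ∧ G.fst e ≠ G.snd e ∧
    (G.fst e = v ∨ G.snd e = v)

/-- `beta G` is the number of distinct 2-cycles of `G`. -/
def beta (G : SignedGraph) : ℕ :=
  ((G.edges ×ˢ G.edges).filter fun p => p.1 < p.2 ∧ G.fst p.1 ≠ G.snd p.1 ∧
     ((G.fst p.1 = G.fst p.2 ∧ G.snd p.1 = G.snd p.2) ∨
      (G.fst p.1 = G.snd p.2 ∧ G.snd p.1 = G.fst p.2))).card

/-- An orientation of a signed graph: `o₁ e` (resp. `o₂ e`) tells whether the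
half-edge of `e` at `fst e` (resp. at `snd e`) points towards its endvertex.
Of the two half-edges of a positive edge exactly one points towards its
endvertex, while for a negative edge none or both do. -/
def IsOrientation (G : SignedGraph) (o₁ o₂ : ℕ → Bool) : Prop :=
  ∀ e ∈ G.edges, (G.sign e = true → o₁ e ≠ o₂ e) ∧ (G.sign e = false → o₁ e = o₂ e)

/-- The excess (inflow minus outflow) at a vertex `v`. -/
def excess (G : SignedGraph) (o₁ o₂ : ℕ → Bool) (φ : ℕ → ℤ) (v : ℕ) : ℤ :=
  ∑ e ∈ G.edges, ((if G.fst e = v then dirVal (o₁ e) * φ e else 0) +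
                  (if G.snd e = v then dirVal (o₂ e) * φ e else 0))

/-- `(o₁, o₂, φ)` is a nowhere-zero `k`-flow on `G`: an orientation together
with a valuation of the edges by nonzero integers of absolute value less
than `k` such that at every vertex the inflow equals the outflow. -/
structure IsNZFlow (G : SignedGraph) (k : ℕ) (o₁ o₂ : ℕ → Bool) (φ : ℕ → ℤ) : Prop where
  orient : G.IsOrientation o₁ o₂
  nonzero : ∀ e ∈ G.edges, φ e ≠ 0
  bounded : ∀ e ∈ G.edges, |φ e| < (k : ℤ)
  conserve : ∀ v ∈ G.verts, G.excess o₁ o₂ φ v = 0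

/-- `G` admits a nowhere-zero `k`-flow. -/
def HasNZFlow (G : SignedGraph) (k : ℕ) : Prop := ∃ o₁ o₂ φ, G.IsNZFlow k o₁ o₂ φ

/-- `G` is flow-admissible: it admits a nowhere-zero `k`-flow for some `k`. -/
def FlowAdmissible (G : SignedGraph) : Prop := ∃ k, G.HasNZFlow k

/-- `(vs, es)` is a cycle of `G`: distinct vertices `vs = [v₀, …, v_{m-1}]`,
distinct edges `es = [e₀, …, e_{m-1}]`, where `eᵢ` joins `vᵢ` and
`v_{i+1 (mod m)}`. -/
structure IsCycle (G : SignedGraph) (vs es : List ℕ) : Prop where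
  nonempty : es ≠ []
  len : vs.length = es.length
  vnodup : vs.Nodup
  enodup : es.Nodup
  vmem : ∀ v ∈ vs, v ∈ G.verts
  emem : ∀ e ∈ es, e ∈ G.edges
  link : ∀ i < es.length,
    G.Joins (es.getD i 0) (vs.getD i 0) (vs.getD ((i + 1) % vs.length) 0)

/-- The number of negative edges in a list of edges. -/
def negCount (G : SignedGraph) (es : List ℕ) : ℕ :=
  (es.filter fun e => G.sign e = false).length

/-- A balanced cycle: a cycle with an even number of negative edges. -/
def IsBalancedCycle (G : SignedGraph) (vs es : List ℕ) : Prop :=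
  G.IsCycle vs es ∧ Even (G.negCount es)

/-- An unbalanced cycle: a cycle with an odd number of negative edges. -/
def IsUnbalancedCycle (G : SignedGraph) (vs es : List ℕ) : Prop :=
  G.IsCycle vs es ∧ Odd (G.negCount es)

/-- A signed graph is unbalanced if it contains an unbalanced cycle. -/
def IsUnbalanced (G : SignedGraph) : Prop := ∃ vs es, G.IsUnbalancedCycle vs es

/-- `(vs, es)` is a path of `G` (possibly trivial, i.e. a single vertex). -/
structure IsPath (G : SignedGraph) (vs es : List ℕ) : Prop where
  nonempty : vs ≠ []
  len : vs.length = es.length + 1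
  vnodup : vs.Nodup
  enodup : es.Nodup
  vmem : ∀ v ∈ vs, v ∈ G.verts
  emem : ∀ e ∈ es, e ∈ G.edges
  link : ∀ i < es.length, G.Joins (es.getD i 0) (vs.getD i 0) (vs.getD (i + 1) 0)

/-- A barbell: two edge-disjoint unbalanced cycles together with a path,
which either joins two vertex-disjoint cycles and is internally
vertex-disjoint from them, or is the trivial path at the single
common vertex of the two cycles. -/
structure IsBarbell (G : SignedGraph) (vs₁ es₁ vs₂ es₂ pvs pes : List ℕ) : Prop where
  cyc1 : G.IsUnbalancedCycle vs₁ es₁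
  cyc2 : G.IsUnbalancedCycle vs₂ es₂
  edge_disj : ∀ e ∈ es₁, e ∉ es₂
  path : G.IsPath pvs pes
  shape :
    ((∀ v ∈ vs₁, v ∉ vs₂) ∧
      pvs.getD 0 0 ∈ vs₁ ∧ pvs.getD (pvs.length - 1) 0 ∈ vs₂ ∧
      (∀ i, 0 < i → i < pvs.length - 1 → pvs.getD i 0 ∉ vs₁ ∧ pvs.getD i 0 ∉ vs₂)) ∨
    (∃ w, w ∈ vs₁ ∧ w ∈ vs₂ ∧ (∀ v ∈ vs₁, v ∈ vs₂ → v = w) ∧ pvs = [w] ∧ pes = [])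

/-- The edge `e` is contained in a signed circuit (a balanced cycle
or a barbell). -/
def InSignedCircuit (G : SignedGraph) (e : ℕ) : Prop :=
  (∃ vs es, G.IsBalancedCycle vs es ∧ e ∈ es) ∨
  (∃ vs₁ es₁ vs₂ es₂ pvs pes, G.IsBarbell vs₁ es₁ vs₂ es₂ pvs pes ∧
    (e ∈ es₁ ∨ e ∈ es₂ ∨ e ∈ pes))

/-- `H` is a subgraph of `G` (with the same labels, endvertices and signs). -/
def IsSubgraph (H G : SignedGraph) : Prop :=
  H.verts ⊆ G.verts ∧ H.edges ⊆ G.edges ∧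
  ∀ e ∈ H.edges, H.fst e = G.fst e ∧ H.snd e = G.snd e ∧ H.sign e = G.sign e

/-- Switching at a vertex `v`: the signs of all edges incident with `v`
(i.e. with exactly one end at `v`) are inverted. -/
def switchAt (G : SignedGraph) (v : ℕ) : SignedGraph where
  verts := G.verts
  edges := G.edges
  fst := G.fst
  snd := G.snd
  sign := fun e => if xor (G.fst e == v) (G.snd e == v) then !(G.sign e) else G.sign e
  fst_mem := G.fst_mem
  snd_mem := G.snd_mem

/-- Connectedness of a (nonempty) signed graph. -/
def Connected (G : SignedGraph) : Prop :=
  G.verts.Nonempty ∧ ∀ u ∈ G.verts, ∀ v ∈ G.verts, Relation.ReflTransGen G.Adj u v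

/-- Deletion of a vertex together with all incident edges. -/
def deleteVert (G : SignedGraph) (v : ℕ) : SignedGraph where
  verts := G.verts.erase v
  edges := G.edges.filter fun e => G.fst e ≠ v ∧ G.snd e ≠ v
  fst := G.fst
  snd := G.snd
  sign := G.sign
  fst_mem := by
    intro e he
    simp only [Finset.mem_filter] at he
    exact Finset.mem_erase.mpr ⟨he.2.1, G.fst_mem e he.1⟩
  snd_mem := by
    intro e he
    simp only [Finset.mem_filter] at he
    exact Finset.mem_erase.mpr ⟨he.2.2, G.snd_mem e he.1⟩

/-- `G` is 2-connected: it is connected and remains connected after the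
deletion of any single vertex. -/
def TwoConnected (G : SignedGraph) : Prop :=
  G.Connected ∧ ∀ v ∈ G.verts, (G.deleteVert v).Connected

end SignedGraph

/-- A two-terminal signed graph: a signed graph with two distinguished
distinct vertices, the source terminal `s` and the target terminal `t`. -/
structure TTGraph extends SignedGraph where
  s : ℕ
  t : ℕ
  s_mem : s ∈ verts
  t_mem : t ∈ verts
  s_ne_t : s ≠ t

namespace TTGraph

/-- Switching at a vertex of a two-terminal signed graph. -/
def switchAt (G : TTGraph) (v : ℕ) : TTGraph where
  toSignedGraph := G.toSignedGraph.switchAt v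
  s := G.s
  t := G.t
  s_mem := G.s_mem
  t_mem := G.t_mem
  s_ne_t := G.s_ne_t

end TTGraph

/-- Two two-terminal signed graphs are switching equivalent if one is
obtained from the other by a finite sequence of switchings. -/
def SwitchEquiv (G G' : TTGraph) : Prop :=
  Relation.ReflTransGen (fun A B => ∃ v ∈ A.verts, B = A.switchAt v) G G'

/-- `G` is the series connection `S(H₁, H₂)`: `H₁` and `H₂` are subgraphs
of `G` sharing exactly the vertex `H₁.t = H₂.s`, partitioning the edges,
with `G.s = H₁.s` and `G.t = H₂.t`. -/
structure IsSeriesConn2 (G H₁ H₂ : TTGraph) : Prop where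
  sub1 : SignedGraph.IsSubgraph H₁.toSignedGraph G.toSignedGraph
  sub2 : SignedGraph.IsSubgraph H₂.toSignedGraph G.toSignedGraph
  vert_union : H₁.verts ∪ H₂.verts = G.verts
  vert_inter : H₁.verts ∩ H₂.verts = {H₁.t}
  mid : H₁.t = H₂.s
  edge_union : H₁.edges ∪ H₂.edges = G.edges
  edge_disj : Disjoint H₁.edges H₂.edges
  src : G.s = H₁.s
  tgt : G.t = H₂.t

/-- `G` is the parallel connection `P(H₁, H₂)`: `H₁` and `H₂` are subgraphs
of `G` sharing exactly the two terminals, partitioning the edges, with the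
terminals of `G`, `H₁` and `H₂` identified. -/
structure IsParallelConn2 (G H₁ H₂ : TTGraph) : Prop where
  sub1 : SignedGraph.IsSubgraph H₁.toSignedGraph G.toSignedGraph
  sub2 : SignedGraph.IsSubgraph H₂.toSignedGraph G.toSignedGraph
  vert_union : H₁.verts ∪ H₂.verts = G.verts
  vert_inter : H₁.verts ∩ H₂.verts = {H₁.s, H₁.t}
  src_eq : H₁.s = H₂.s
  tgt_eq : H₁.t = H₂.t
  edge_union : H₁.edges ∪ H₂.edges = G.edges
  edge_disj : Disjoint H₁.edges H₂.edges
  src : G.s = H₁.s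
  tgt : G.t = H₁.t

/-- `G` is a (signed) copy of `K₂`: a single edge joining the two terminals. -/
def IsSignedK2 (G : TTGraph) : Prop :=
  G.verts = {G.s, G.t} ∧ ∃ e, G.edges = {e} ∧ G.toSignedGraph.Joins e G.s G.t

/-- Series-parallel two-terminal graphs: obtained from copies of `K₂` by
iterated series and parallel connections. -/
inductive IsSP : TTGraph → Prop
  | k2 {G} : IsSignedK2 G → IsSP G
  | series {G H₁ H₂} : IsSeriesConn2 G H₁ H₂ → IsSP H₁ → IsSP H₂ → IsSP G
  | parallel {G H₁ H₂} : IsParallelConn2 G H₁ H₂ → IsSP H₁ → IsSP H₂ → IsSP G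

/-- `G` is the series connection `S(H₁, …, Hₙ)` of the graphs in the list
(of length at least two). -/
inductive IsSeriesConnList : TTGraph → List TTGraph → Prop
  | two {G H₁ H₂} : IsSeriesConn2 G H₁ H₂ → IsSeriesConnList G [H₁, H₂]
  | cons {G G' H l} : IsSeriesConn2 G H G' → IsSeriesConnList G' l →
      IsSeriesConnList G (H :: l)

/-- `G` is the parallel connection `P(H₁, …, Hₙ)` of the graphs in the list
(of length at least two). -/
inductive IsParallelConnList : TTGraph → List TTGraph → Prop
  | two {G H₁ H₂} : IsParallelConn2 G H₁ H₂ → IsParallelConnList G [H₁, H₂]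
  | cons {G G' H l} : IsParallelConn2 G H G' → IsParallelConnList G' l →
      IsParallelConnList G (H :: l)

/-- `l` is the list of parts of `G` for a series connection: `G` is a series
connection of the series-parallel graphs in `l`, with `l` of maximum length. -/
def IsSeriesPartsOf (G : TTGraph) (l : List TTGraph) : Prop :=
  IsSeriesConnList G l ∧ (∀ H ∈ l, IsSP H) ∧
  ∀ l', IsSeriesConnList G l' → (∀ H ∈ l', IsSP H) → l'.length ≤ l.length

/-- `l` is the list of parts of `G` for a parallel connection. -/
def IsParallelPartsOf (G : TTGraph) (l : List TTGraph) : Prop :=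
  IsParallelConnList G l ∧ (∀ H ∈ l, IsSP H) ∧
  ∀ l', IsParallelConnList G l' → (∀ H ∈ l', IsSP H) → l'.length ≤ l.length

/-- `l` is the list of parts of `G`. -/
def IsPartsOf (G : TTGraph) (l : List TTGraph) : Prop :=
  IsSeriesPartsOf G l ∨ IsParallelPartsOf G l

/-- `H` is a part of `G`. -/
def IsPart (H G : TTGraph) : Prop := ∃ l, IsPartsOf G l ∧ H ∈ l

/-- `H` is a piece of `G`: there is a sequence `H = H₀, H₁, …, Hₘ = G`
where each `Hⱼ` is a part of `H_{j+1}`; in particular `G` is a piece of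
itself. -/
def IsPiece (H G : TTGraph) : Prop := Relation.ReflTransGen IsPart H G

/-- `G` is of series type: it is a series connection of its parts. -/
def IsSeriesType (G : TTGraph) : Prop := ∃ l, IsSeriesPartsOf G l

/-- `G` is of parallel type: it is a parallel connection of its parts. -/
def IsParallelType (G : TTGraph) : Prop := ∃ l, IsParallelPartsOf G l

/-- `H` is an endpart of `G`: the first or last part of a series
decomposition of `G` into its parts. -/
def IsEndpartOf (H G : TTGraph) : Prop :=
  ∃ l, IsSeriesPartsOf G l ∧ (l.head? = some H ∨ l.getLast? = some H)

/-- `DepthLe G d`: the depth of `G` is at most `d`.  The depth of a signed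
`K₂` is `0`; otherwise it is `1` plus the maximum depth of a part. -/
inductive DepthLe : TTGraph → ℕ → Prop
  | k2 {G d} : IsSignedK2 G → DepthLe G d
  | step {G l d} : IsPartsOf G l → (∀ H ∈ l, DepthLe H d) → DepthLe G (d + 1)

/-- `HasDepth G d`: the depth of `G` is exactly `d`, i.e. `d` is the least
upper bound in the recursive definition of depth. -/
def HasDepth (G : TTGraph) (d : ℕ) : Prop :=
  DepthLe G d ∧ ∀ d' < d, ¬ DepthLe G d'

/-- `G` is reduced: each non-terminal vertex has degree at least `3`, and
no two parallel edges have the same sign. -/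
def IsReducedGraph (G : TTGraph) : Prop :=
  (∀ v ∈ G.verts, v ≠ G.s → v ≠ G.t → 3 ≤ G.toSignedGraph.degree v) ∧
  (∀ e ∈ G.edges, ∀ f ∈ G.edges, G.toSignedGraph.Parallel e f → G.sign e ≠ G.sign f)

/-- `G` is a positive `K₂` (denoted `K₂⁺`). -/
def IsPositiveK2 (G : TTGraph) : Prop :=
  IsSignedK2 G ∧ ∀ e ∈ G.edges, G.sign e = true

/-- `G` is the unbalanced 2-cycle `D`: two parallel edges of opposite signs
joining the two terminals. -/
def IsUnbalanced2Cycle (G : TTGraph) : Prop :=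
  G.verts = {G.s, G.t} ∧ ∃ e f, e ≠ f ∧ G.edges = {e, f} ∧
    G.toSignedGraph.Joins e G.s G.t ∧ G.toSignedGraph.Joins f G.s G.t ∧
    G.sign e ≠ G.sign f

/-- `G` is a string: a copy of `K₂⁺` or `D`, or a series connection of copies
of `K₂⁺` and `D`, in which every non-terminal vertex lies in a 2-cycle. -/
def IsString (G : TTGraph) : Prop :=
  (IsPositiveK2 G ∨ IsUnbalanced2Cycle G ∨
    ∃ l, IsSeriesConnList G l ∧ ∀ H ∈ l, IsPositiveK2 H ∨ IsUnbalanced2Cycle H) ∧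
  ∀ v ∈ G.verts, v ≠ G.s → v ≠ G.t → G.toSignedGraph.In2Cycle v

/-- `G` is a necklace: a parallel connection of two strings, at least one of
which is nontrivial (has more than two vertices). -/
def IsNecklace (G : TTGraph) : Prop :=
  ∃ H₁ H₂, IsParallelConn2 G H₁ H₂ ∧ IsString H₁ ∧ IsString H₂ ∧
    (2 < H₁.verts.card ∨ 2 < H₂.verts.card)

/-- `(o₁, o₂, φ)` is an `(a,b)`-pseudoflow on the two-terminal signed graph
`G`: like a nowhere-zero 6-flow, except that at the source terminal the
outflow exceeds the inflow by `a`, and at the target terminal the inflow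
exceeds the outflow by `b`. -/
structure IsPseudoflow (G : TTGraph) (a b : ℤ) (o₁ o₂ : ℕ → Bool) (φ : ℕ → ℤ) :
    Prop where
  orient : G.toSignedGraph.IsOrientation o₁ o₂
  nonzero : ∀ e ∈ G.edges, φ e ≠ 0
  bounded : ∀ e ∈ G.edges, |φ e| < 6
  conserve : ∀ v ∈ G.verts, v ≠ G.s → v ≠ G.t →
    G.toSignedGraph.excess o₁ o₂ φ v = 0
  out_s : G.toSignedGraph.excess o₁ o₂ φ G.s = -a
  in_t : G.toSignedGraph.excess o₁ o₂ φ G.t = b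

/-- `G` admits an `(a,b)`-pseudoflow. -/
def HasPseudoflow (G : TTGraph) (a b : ℤ) : Prop :=
  ∃ o₁ o₂ φ, IsPseudoflow G a b o₁ o₂ φ

/-- `I₅ = {-5, …, 5}`. -/
noncomputable def I5 : Finset ℤ := Finset.Icc (-5) 5

/-- The pair `(a,b)` is valid for `G`: `a ≠ 0` or `deg(s) ≥ 2`, and
`b ≠ 0` or `deg(t) ≥ 2`. -/
def ValidPair (G : TTGraph) (a b : ℤ) : Prop :=
  (a ≠ 0 ∨ 2 ≤ G.toSignedGraph.degree G.s) ∧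
  (b ≠ 0 ∨ 2 ≤ G.toSignedGraph.degree G.t)

/-- `G` is a flow-admissible signed series-parallel graph with no
nowhere-zero 6-flow, with the minimum number of edges among all such
graphs. -/
def MinCounterexample (G : TTGraph) : Prop :=
  IsSP G ∧ G.toSignedGraph.FlowAdmissible ∧ ¬ G.toSignedGraph.HasNZFlow 6 ∧
  ∀ G' : TTGraph, IsSP G' → G'.toSignedGraph.FlowAdmissible →
    ¬ G'.toSignedGraph.HasNZFlow 6 → G.edges.card ≤ G'.edges.card

/-- `W` is a copy of `S(K₂⁺, D, K₂⁺)`. -/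
def IsSK2DK2 (W : TTGraph) : Prop :=
  ∃ A B C, IsSeriesConnList W [A, B, C] ∧ IsPositiveK2 A ∧
    IsUnbalanced2Cycle B ∧ IsPositiveK2 C

/-- `G'` is obtained from `G` by replacing the piece `H` (with terminals
`H.s`, `H.t`) by the two-terminal graph `W`: the edges and non-terminal
vertices of `H` are removed, `W` (whose new vertices are fresh) is added,
and its terminals are identified with the terminals of `H`. -/
def IsReplacement (G H G' W : TTGraph) : Prop :=
  W.s = H.s ∧ W.t = H.t ∧ G'.s = G.s ∧ G'.t = G.t ∧
  W.verts ∩ G.verts ⊆ {H.s, H.t} ∧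
  G'.verts = (G.verts \ (H.verts \ {H.s, H.t})) ∪ W.verts ∧
  G'.edges = (G.edges \ H.edges) ∪ W.edges ∧
  Disjoint (G.edges \ H.edges) W.edges ∧
  (∀ e ∈ G.edges \ H.edges,
    G'.fst e = G.fst e ∧ G'.snd e = G.snd e ∧ G'.sign e = G.sign e) ∧
  SignedGraph.IsSubgraph W.toSignedGraph G'.toSignedGraph


/-! ### Auxiliary machinery for the proof -/

section Aux

open Finset

namespace SignedGraph

lemma sub_trans {A B C : SignedGraph} (h1 : A.IsSubgraph B) (h2 : B.IsSubgraph C) :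
    A.IsSubgraph C := by
  refine ⟨h1.1.trans h2.1, h1.2.1.trans h2.2.1, fun e he => ?_⟩
  obtain ⟨e1, e2, e3⟩ := h1.2.2 e he
  obtain ⟨f1, f2, f3⟩ := h2.2.2 e (h1.2.1 he)
  exact ⟨e1.trans f1, e2.trans f2, e3.trans f3⟩

lemma joins_sub {A B : SignedGraph} (h : A.IsSubgraph B) {e u v : ℕ} (he : e ∈ A.edges)
    (hj : A.Joins e u v) : B.Joins e u v := by
  obtain ⟨h1, h2, _⟩ := h.2.2 e he
  rcases hj with ⟨a, b⟩ | ⟨a, b⟩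
  · exact Or.inl ⟨h1 ▸ a, h2 ▸ b⟩
  · exact Or.inr ⟨h1 ▸ a, h2 ▸ b⟩

lemma degree_eq_zero {G : SignedGraph} {v : ℕ} (hv : v ∉ G.verts) : G.degree v = 0 := by
  refine Finset.sum_eq_zero fun e he => ?_
  rw [if_neg, if_neg]
  · simp
  · intro h; exact hv (h ▸ G.snd_mem e he)
  · intro h; exact hv (h ▸ G.fst_mem e he)

lemma joins_parallel {G : SignedGraph} {e f s t : ℕ} (hst : s ≠ t) (hef : e ≠ f)
    (he : G.Joins e s t) (hf : G.Joins f s t) : G.Parallel e f := by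
  refine ⟨hef, ?_⟩
  rcases he with ⟨a, b⟩ | ⟨a, b⟩ <;> rcases hf with ⟨c, d⟩ | ⟨c, d⟩
  · exact Or.inl ⟨by rw [a, c], by rw [b, d]⟩
  · exact Or.inr ⟨by rw [a, d], by rw [b, c]⟩
  · exact Or.inr ⟨by rw [a, d], by rw [b, c]⟩
  · exact Or.inl ⟨by rw [a, c], by rw [b, d]⟩

lemma joins_fst_ne_snd {G : SignedGraph} {e s t : ℕ} (hst : s ≠ t) (he : G.Joins e s t) :
    G.fst e ≠ G.snd e := by
  rcases he with ⟨a, b⟩ | ⟨a, b⟩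
  · rw [a, b]; exact hst
  · rw [a, b]; exact hst.symm

end SignedGraph

namespace TTGraph

/-- Simultaneous switching at all vertices of a finite set. -/
def switchSet (G : TTGraph) (S : Finset ℕ) : TTGraph where
  verts := G.verts
  edges := G.edges
  fst := G.fst
  snd := G.snd
  sign := fun e => xor (xor (decide (G.fst e ∈ S)) (decide (G.snd e ∈ S))) (G.sign e)
  fst_mem := G.fst_mem
  snd_mem := G.snd_mem
  s := G.s
  t := G.t
  s_mem := G.s_mem
  t_mem := G.t_mem
  s_ne_t := G.s_ne_t

@[simp] lemma switchSet_verts (G : TTGraph) (S : Finset ℕ) : (G.switchSet S).verts = G.verts := rfl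
@[simp] lemma switchSet_edges (G : TTGraph) (S : Finset ℕ) : (G.switchSet S).edges = G.edges := rfl
@[simp] lemma switchSet_fst (G : TTGraph) (S : Finset ℕ) : (G.switchSet S).fst = G.fst := rfl
@[simp] lemma switchSet_snd (G : TTGraph) (S : Finset ℕ) : (G.switchSet S).snd = G.snd := rfl
@[simp] lemma switchSet_s (G : TTGraph) (S : Finset ℕ) : (G.switchSet S).s = G.s := rfl
@[simp] lemma switchSet_t (G : TTGraph) (S : Finset ℕ) : (G.switchSet S).t = G.t := rfl
lemma switchSet_sign (G : TTGraph) (S : Finset ℕ) (e : ℕ) :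
    (G.switchSet S).sign e =
      xor (xor (decide (G.fst e ∈ S)) (decide (G.snd e ∈ S))) (G.sign e) := rfl

lemma eq_of_fields {G G' : TTGraph} (h1 : G.verts = G'.verts) (h2 : G.edges = G'.edges)
    (h3 : G.fst = G'.fst) (h4 : G.snd = G'.snd) (h5 : G.sign = G'.sign)
    (h6 : G.s = G'.s) (h7 : G.t = G'.t) : G = G' := by
  obtain ⟨⟨v, e, f, s, sg, _, _⟩, _, _, _, _, _⟩ := G
  obtain ⟨⟨v', e', f', s', sg', _, _⟩, _, _, _, _, _⟩ := G'
  simp_all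

lemma switchSet_empty (G : TTGraph) : G.switchSet ∅ = G := by
  apply eq_of_fields <;> try rfl
  funext e; simp [switchSet_sign]

lemma switchSet_insert (G : TTGraph) {v : ℕ} {S : Finset ℕ} (hv : v ∉ S) :
    G.switchSet (insert v S) = (G.switchSet S).switchAt v := by
  apply eq_of_fields <;> try rfl
  funext e
  show xor (xor (decide (G.fst e ∈ insert v S)) (decide (G.snd e ∈ insert v S))) (G.sign e) =
    (if xor (G.fst e == v) (G.snd e == v)
      then !(xor (xor (decide (G.fst e ∈ S)) (decide (G.snd e ∈ S))) (G.sign e))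
      else xor (xor (decide (G.fst e ∈ S)) (decide (G.snd e ∈ S))) (G.sign e))
  by_cases h1 : G.fst e = v <;> by_cases h2 : G.snd e = v <;>
    by_cases h3 : G.fst e ∈ S <;> by_cases h4 : G.snd e ∈ S <;>
    simp_all <;> cases G.sign e <;> simp_all

lemma switchEquiv_switchSet (G : TTGraph) {S : Finset ℕ} (hS : S ⊆ G.verts) :
    SwitchEquiv G (G.switchSet S) := by
  classical
  induction S using Finset.induction_on with
  | empty => rw [switchSet_empty]; exact Relation.ReflTransGen.refl
  | @insert v S hv ih =>
    have hS' : S ⊆ G.verts := fun x hx => hS (Finset.mem_insert_of_mem hx)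
    refine Relation.ReflTransGen.tail (ih hS') ?_
    exact ⟨v, hS (Finset.mem_insert_self v S), (G.switchSet_insert hv)⟩

end TTGraph

end Aux


section Aux2

open Finset

namespace TTGraph

lemma switchSet_sub {H G : TTGraph} (S : Finset ℕ)
    (h : H.toSignedGraph.IsSubgraph G.toSignedGraph) :
    (H.switchSet S).toSignedGraph.IsSubgraph (G.switchSet S).toSignedGraph := by
  refine ⟨h.1, h.2.1, fun e he => ?_⟩
  obtain ⟨h1, h2, h3⟩ := h.2.2 e he
  refine ⟨h1, h2, ?_⟩
  rw [switchSet_sign, switchSet_sign, h1, h2, h3]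

lemma switchSet_signedK2 {H : TTGraph} (S : Finset ℕ) (h : IsSignedK2 H) :
    IsSignedK2 (H.switchSet S) := by
  obtain ⟨hv, e, he, hj⟩ := h
  exact ⟨hv, e, he, hj⟩

/-- The sign of the unique edge of a `K₂` after switching. -/
lemma switchSet_k2_pos {H : TTGraph} {S : Finset ℕ} (h : IsSignedK2 H)
    (hs : ∀ e ∈ H.edges, xor (xor (decide (H.s ∈ S)) (decide (H.t ∈ S))) (H.sign e) = true) :
    IsPositiveK2 (H.switchSet S) := by
  refine ⟨switchSet_signedK2 S h, fun e he => ?_⟩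
  obtain ⟨hv, e0, he0, hj⟩ := h
  rw [switchSet_edges, he0, Finset.mem_singleton] at he
  subst he
  rw [switchSet_sign]
  have := hs e (by rw [he0]; exact Finset.mem_singleton_self e)
  rcases hj with ⟨a, b⟩ | ⟨a, b⟩
  · rw [a, b]; exact this
  · rw [a, b, Bool.xor_comm (decide (H.t ∈ S))]; exact this

lemma switchSet_d {H : TTGraph} (S : Finset ℕ) (h : IsUnbalanced2Cycle H) :
    IsUnbalanced2Cycle (H.switchSet S) := by
  obtain ⟨hv, e, f, hef, hE, hje, hjf, hsg⟩ := h
  refine ⟨hv, e, f, hef, hE, hje, hjf, ?_⟩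
  rw [switchSet_sign, switchSet_sign]
  have hb : xor (decide (H.fst e ∈ S)) (decide (H.snd e ∈ S)) =
      xor (decide (H.fst f ∈ S)) (decide (H.snd f ∈ S)) := by
    rcases hje with ⟨a, b⟩ | ⟨a, b⟩ <;> rcases hjf with ⟨c, d⟩ | ⟨c, d⟩ <;>
      rw [a, b, c, d] <;> rw [Bool.xor_comm]
  rw [hb]
  intro hcon
  apply hsg
  cases hx : xor (decide (H.fst f ∈ S)) (decide (H.snd f ∈ S)) <;> rw [hx] at hcon <;>
    cases h1 : H.sign e <;> cases h2 : H.sign f <;> simp_all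

/-- Transfer of the target predicates between switching sets that agree on the
vertices of `H`. -/
lemma switchSet_congr {H : TTGraph} {S S' : Finset ℕ}
    (h : ∀ v ∈ H.verts, (v ∈ S ↔ v ∈ S'))
    (hp : IsPositiveK2 (H.switchSet S') ∨ IsUnbalanced2Cycle (H.switchSet S')) :
    IsPositiveK2 (H.switchSet S) ∨ IsUnbalanced2Cycle (H.switchSet S) := by
  have hsg : ∀ e ∈ H.edges, (H.switchSet S).sign e = (H.switchSet S').sign e := by
    intro e he
    rw [switchSet_sign, switchSet_sign,
      decide_eq_decide.mpr (h _ (H.fst_mem e he)), decide_eq_decide.mpr (h _ (H.snd_mem e he))]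
  rcases hp with ⟨hk, hpos⟩ | ⟨hv, e, f, hef, hE, hje, hjf, hsgn⟩
  · left
    obtain ⟨hv, e, he, hj⟩ := hk
    exact ⟨⟨hv, e, he, hj⟩, fun e' he' => (hsg e' he').trans (hpos e' he')⟩
  · right
    have he : e ∈ H.edges := by rw [show H.edges = (H.switchSet S').edges from rfl, hE]; simp
    have hf : f ∈ H.edges := by rw [show H.edges = (H.switchSet S').edges from rfl, hE]; simp
    refine ⟨hv, e, f, hef, hE, hje, hjf, ?_⟩
    rw [hsg e he, hsg f hf]; exact hsgn

lemma switchSet_seriesConn2 {G H₁ H₂ : TTGraph} (S : Finset ℕ) (h : IsSeriesConn2 G H₁ H₂) :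
    IsSeriesConn2 (G.switchSet S) (H₁.switchSet S) (H₂.switchSet S) := by
  exact ⟨switchSet_sub S h.sub1, switchSet_sub S h.sub2, h.vert_union, h.vert_inter,
    h.mid, h.edge_union, h.edge_disj, h.src, h.tgt⟩

lemma switchSet_seriesConnList {G : TTGraph} {l : List TTGraph} (S : Finset ℕ)
    (h : IsSeriesConnList G l) :
    IsSeriesConnList (G.switchSet S) (l.map (fun H => H.switchSet S)) := by
  induction h with
  | two h2 => exact .two (switchSet_seriesConn2 S h2)
  | cons h2 _ ih => exact .cons (switchSet_seriesConn2 S h2) ih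

end TTGraph

/-! Structural facts about series and parallel connection lists. -/

lemma seriesConnList_cons {G : TTGraph} {l : List TTGraph} (h : IsSeriesConnList G l) :
    ∃ A t, l = A :: t := by
  cases h with
  | two _ => exact ⟨_, _, rfl⟩
  | cons _ _ => exact ⟨_, _, rfl⟩

lemma parallelConnList_cons {G : TTGraph} {l : List TTGraph} (h : IsParallelConnList G l) :
    ∃ A t, l = A :: t := by
  cases h with
  | two _ => exact ⟨_, _, rfl⟩
  | cons _ _ => exact ⟨_, _, rfl⟩

lemma seriesConnList_shape {G : TTGraph} {l : List TTGraph} (h : IsSeriesConnList G l) :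
    ∃ A B t, l = A :: B :: t := by
  cases h with
  | two _ => exact ⟨_, _, [], rfl⟩
  | @cons _ G' H l h2 h' =>
    obtain ⟨A, t, rfl⟩ := seriesConnList_cons h'
    exact ⟨H, A, t, rfl⟩

lemma parallelConnList_shape {G : TTGraph} {l : List TTGraph} (h : IsParallelConnList G l) :
    ∃ A B t, l = A :: B :: t := by
  cases h with
  | two _ => exact ⟨_, _, [], rfl⟩
  | @cons _ G' H l h2 h' =>
    obtain ⟨A, t, rfl⟩ := parallelConnList_cons h'
    exact ⟨H, A, t, rfl⟩

lemma seriesConnList_sub {G : TTGraph} {l : List TTGraph} (h : IsSeriesConnList G l) :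
    ∀ H ∈ l, H.toSignedGraph.IsSubgraph G.toSignedGraph := by
  induction h with
  | two h2 =>
    intro H hH
    simp only [List.mem_cons, List.not_mem_nil, or_false] at hH
    rcases hH with rfl | rfl
    · exact h2.sub1
    · exact h2.sub2
  | cons h2 h' ih =>
    intro H hH
    rcases List.mem_cons.mp hH with rfl | hH
    · exact h2.sub1
    · exact SignedGraph.sub_trans (ih H hH) h2.sub2

lemma parallelConnList_sub {G : TTGraph} {l : List TTGraph} (h : IsParallelConnList G l) :
    ∀ H ∈ l, H.toSignedGraph.IsSubgraph G.toSignedGraph := by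
  induction h with
  | two h2 =>
    intro H hH
    simp only [List.mem_cons, List.not_mem_nil, or_false] at hH
    rcases hH with rfl | rfl
    · exact h2.sub1
    · exact h2.sub2
  | cons h2 h' ih =>
    intro H hH
    rcases List.mem_cons.mp hH with rfl | hH
    · exact h2.sub1
    · exact SignedGraph.sub_trans (ih H hH) h2.sub2

lemma parallelConnList_edge_mem {G : TTGraph} {l : List TTGraph} (h : IsParallelConnList G l) :
    ∀ e ∈ G.edges, ∃ H ∈ l, e ∈ H.edges := by
  induction h with
  | @two _ H₁ H₂ h2 =>
    intro e he
    rw [← h2.edge_union, Finset.mem_union] at he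
    rcases he with he | he
    · exact ⟨H₁, by simp, he⟩
    · exact ⟨H₂, by simp, he⟩
  | @cons _ G' H l h2 h' ih =>
    intro e he
    rw [← h2.edge_union, Finset.mem_union] at he
    rcases he with he | he
    · exact ⟨H, by simp, he⟩
    · obtain ⟨H', hH', he'⟩ := ih e he
      exact ⟨H', by simp [hH'], he'⟩

lemma parallelConnList_terms {G : TTGraph} {l : List TTGraph} (h : IsParallelConnList G l) :
    ∀ H ∈ l, H.s = G.s ∧ H.t = G.t := by
  induction h with
  | @two _ H₁ H₂ h2 =>
    intro H hH
    simp only [List.mem_cons, List.not_mem_nil, or_false] at hH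
    rcases hH with rfl | rfl
    · exact ⟨h2.src.symm, h2.tgt.symm⟩
    · exact ⟨h2.src_eq ▸ h2.src.symm, h2.tgt_eq ▸ h2.tgt.symm⟩
  | @cons _ G' H l h2 h' ih =>
    intro H' hH'
    rcases List.mem_cons.mp hH' with rfl | hH'
    · exact ⟨h2.src.symm, h2.tgt.symm⟩
    · obtain ⟨a, b⟩ := ih H' hH'
      refine ⟨?_, ?_⟩
      · rw [a, ← h2.src_eq, ← h2.src]
      · rw [b, ← h2.tgt_eq, ← h2.tgt]

lemma parallelConnList_verts {G : TTGraph} {l : List TTGraph} (h : IsParallelConnList G l)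
    (hv : ∀ H ∈ l, H.verts = {H.s, H.t}) : G.verts = {G.s, G.t} := by
  induction h with
  | @two _ H₁ H₂ h2 =>
    have e1 := hv H₁ (by simp)
    have e2 := hv H₂ (by simp)
    rw [← h2.vert_union, e1, e2, h2.src, h2.tgt, h2.src_eq, h2.tgt_eq]
    simp
  | @cons _ G' H l h2 h' ih =>
    have e1 := hv H (by simp)
    have e2 := ih (fun H' hH' => hv H' (by simp [hH']))
    rw [← h2.vert_union, e1, e2, h2.src, h2.tgt, h2.src_eq, h2.tgt_eq]
    simp

lemma parallelConnList_card {G : TTGraph} {l : List TTGraph} (h : IsParallelConnList G l)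
    (hc : ∀ H ∈ l, 1 ≤ H.edges.card) : l.length ≤ G.edges.card := by
  induction h with
  | @two _ H₁ H₂ h2 =>
    rw [← h2.edge_union, Finset.card_union_of_disjoint h2.edge_disj]
    have := hc H₁ (by simp)
    have := hc H₂ (by simp)
    simp only [List.length]
    omega
  | @cons _ G' H l h2 h' ih =>
    rw [← h2.edge_union, Finset.card_union_of_disjoint h2.edge_disj]
    have h1 := hc H (by simp)
    have h2' := ih (fun H' hH' => hc H' (by simp [hH']))
    simp only [List.length_cons]
    omega

end Aux2


section Aux3

open Finset

lemma seriesConn2_degree_split {G H₁ H₂ : TTGraph} (h : IsSeriesConn2 G H₁ H₂) (v : ℕ) :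
    G.toSignedGraph.degree v = H₁.toSignedGraph.degree v + H₂.toSignedGraph.degree v := by
  unfold SignedGraph.degree
  rw [← h.edge_union, Finset.sum_union h.edge_disj]
  congr 1
  · refine Finset.sum_congr rfl fun e he => ?_
    rw [(h.sub1.2.2 e he).1, (h.sub1.2.2 e he).2.1]
  · refine Finset.sum_congr rfl fun e he => ?_
    rw [(h.sub2.2.2 e he).1, (h.sub2.2.2 e he).2.1]

lemma parallelConn2_degree_split {G H₁ H₂ : TTGraph} (h : IsParallelConn2 G H₁ H₂) (v : ℕ) :
    G.toSignedGraph.degree v = H₁.toSignedGraph.degree v + H₂.toSignedGraph.degree v := by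
  unfold SignedGraph.degree
  rw [← h.edge_union, Finset.sum_union h.edge_disj]
  congr 1
  · refine Finset.sum_congr rfl fun e he => ?_
    rw [(h.sub1.2.2 e he).1, (h.sub1.2.2 e he).2.1]
  · refine Finset.sum_congr rfl fun e he => ?_
    rw [(h.sub2.2.2 e he).1, (h.sub2.2.2 e he).2.1]

lemma sconn2_s_not_mem {G H₁ H₂ : TTGraph} (h : IsSeriesConn2 G H₁ H₂) : G.s ∉ H₂.verts := by
  intro hmem
  have : G.s ∈ H₁.verts ∩ H₂.verts := Finset.mem_inter.mpr ⟨h.src ▸ H₁.s_mem, hmem⟩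
  rw [h.vert_inter, Finset.mem_singleton, h.src] at this
  exact H₁.s_ne_t this

lemma sconn2_t_not_mem {G H₁ H₂ : TTGraph} (h : IsSeriesConn2 G H₁ H₂) : G.t ∉ H₁.verts := by
  intro hmem
  have : G.t ∈ H₁.verts ∩ H₂.verts := Finset.mem_inter.mpr ⟨hmem, h.tgt ▸ H₂.t_mem⟩
  rw [h.vert_inter, Finset.mem_singleton, h.tgt, h.mid] at this
  exact H₂.s_ne_t this.symm

lemma k2_degree {H : TTGraph} (h : IsSignedK2 H) :
    H.toSignedGraph.degree H.s = 1 ∧ H.toSignedGraph.degree H.t = 1 := by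
  obtain ⟨hv, e, he, hj⟩ := h
  unfold SignedGraph.degree
  rw [he, Finset.sum_singleton, Finset.sum_singleton]
  rcases hj with ⟨a, b⟩ | ⟨a, b⟩
  · rw [a, b, if_pos rfl, if_neg H.s_ne_t.symm, if_neg H.s_ne_t, if_pos rfl]
    omega
  · rw [a, b, if_neg H.s_ne_t.symm, if_pos rfl, if_pos rfl, if_neg H.s_ne_t]
    omega

/-- Master structural lemma for series connection lists: degree localization,
junction degrees, and head behaviour. -/
lemma gen_series {G : TTGraph} {l : List TTGraph} (h : IsSeriesConnList G l) :
    (∀ H ∈ l, ∀ v ∈ H.verts, v ≠ H.s → v ≠ H.t →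
      G.toSignedGraph.degree v = H.toSignedGraph.degree v ∧ v ≠ G.s ∧ v ≠ G.t ∧ v ∈ G.verts) ∧
    List.Chain' (fun A B => A.t = B.s ∧ A.t ∈ G.verts ∧ A.t ≠ G.s ∧ A.t ≠ G.t ∧
      G.toSignedGraph.degree A.t =
        A.toSignedGraph.degree A.t + B.toSignedGraph.degree B.s) l ∧
    (∀ H, l.head? = some H →
      G.s = H.s ∧ G.toSignedGraph.degree G.s = H.toSignedGraph.degree H.s) := by
  induction h with
  | @two G0 H₁ H₂ h2 =>
    have hsplit := seriesConn2_degree_split h2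
    refine ⟨?_, ?_, ?_⟩
    · intro H hH v hv hvs hvt
      simp only [List.mem_cons, List.not_mem_nil, or_false] at hH
      rcases hH with rfl | rfl
      · have hv2 : v ∉ H₂.verts := by
          intro hmem
          have : v ∈ H.verts ∩ H₂.verts := Finset.mem_inter.mpr ⟨hv, hmem⟩
          rw [h2.vert_inter, Finset.mem_singleton] at this
          exact hvt this
        refine ⟨?_, ?_, ?_, ?_⟩
        · rw [hsplit v, SignedGraph.degree_eq_zero hv2]; omega
        · rw [h2.src]; exact hvs
        · intro hEq; exact hv2 (hEq ▸ h2.tgt ▸ H₂.t_mem)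
        · rw [← h2.vert_union]; exact Finset.mem_union_left _ hv
      · have hv1 : v ∉ H₁.verts := by
          intro hmem
          have : v ∈ H₁.verts ∩ H.verts := Finset.mem_inter.mpr ⟨hmem, hv⟩
          rw [h2.vert_inter, Finset.mem_singleton] at this
          exact hvs (this ▸ h2.mid)
        refine ⟨?_, ?_, ?_, ?_⟩
        · rw [hsplit v, SignedGraph.degree_eq_zero hv1]; omega
        · intro hEq; exact hv1 (hEq ▸ h2.src ▸ H₁.s_mem)
        · rw [h2.tgt]; exact hvt
        · rw [← h2.vert_union]; exact Finset.mem_union_right _ hv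
    · refine List.isChain_cons_cons.mpr ⟨?_, List.isChain_singleton _⟩
      refine ⟨h2.mid, ?_, ?_, ?_, ?_⟩
      · rw [← h2.vert_union]; exact Finset.mem_union_left _ H₁.t_mem
      · rw [h2.src]; exact H₁.s_ne_t.symm
      · rw [h2.tgt, h2.mid]; exact H₂.s_ne_t
      · rw [hsplit H₁.t, h2.mid]
    · intro H hH
      simp only [List.head?_cons, Option.some.injEq] at hH
      subst hH
      refine ⟨h2.src, ?_⟩
      rw [hsplit G0.s, SignedGraph.degree_eq_zero (sconn2_s_not_mem h2), h2.src]; omega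
  | @cons G0 G'' H l h2 h' ih =>
    obtain ⟨ihL, ihC, ihH⟩ := ih
    have hsplit := seriesConn2_degree_split h2
    have hsG : G0.s ∉ G''.verts := sconn2_s_not_mem h2
    have htH : G0.t ∉ H.verts := sconn2_t_not_mem h2
    refine ⟨?_, ?_, ?_⟩
    · intro H0 hH0 v hv hvs hvt
      rcases List.mem_cons.mp hH0 with rfl | hH0
      · have hv2 : v ∉ G''.verts := by
          intro hmem
          have : v ∈ H0.verts ∩ G''.verts := Finset.mem_inter.mpr ⟨hv, hmem⟩
          rw [h2.vert_inter, Finset.mem_singleton] at this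
          exact hvt this
        refine ⟨?_, ?_, ?_, ?_⟩
        · rw [hsplit v, SignedGraph.degree_eq_zero hv2]; omega
        · rw [h2.src]; exact hvs
        · intro hEq; exact hv2 (hEq ▸ h2.tgt ▸ G''.t_mem)
        · rw [← h2.vert_union]; exact Finset.mem_union_left _ hv
      · obtain ⟨hdeg, hs, ht, hmem⟩ := ihL H0 hH0 v hv hvs hvt
        have hv1 : v ∉ H.verts := by
          intro hmem'
          have : v ∈ H.verts ∩ G''.verts := Finset.mem_inter.mpr ⟨hmem', hmem⟩
          rw [h2.vert_inter, Finset.mem_singleton] at this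
          exact hs (this ▸ h2.mid)
        refine ⟨?_, ?_, ?_, ?_⟩
        · rw [hsplit v, SignedGraph.degree_eq_zero hv1, hdeg]; omega
        · intro hEq; exact hv1 (hEq ▸ h2.src ▸ H.s_mem)
        · rw [h2.tgt]; exact ht
        · rw [← h2.vert_union]; exact Finset.mem_union_right _ hmem
    · refine List.isChain_cons.mpr ⟨?_, ?_⟩
      · intro y hy
        obtain ⟨hys, hydeg⟩ := ihH y hy
        refine ⟨h2.mid.trans hys, ?_, ?_, ?_, ?_⟩
        · rw [← h2.vert_union]; exact Finset.mem_union_left _ H.t_mem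
        · rw [h2.src]; exact H.s_ne_t.symm
        · rw [h2.tgt, h2.mid]; exact G''.s_ne_t
        · rw [hsplit H.t, h2.mid, hydeg, ← h2.mid]
      · refine List.IsChain.imp ?_ ihC
        rintro A B ⟨e1, e2, e3, e4, e5⟩
        have hAH : A.t ∉ H.verts := by
          intro hmem'
          have : A.t ∈ H.verts ∩ G''.verts := Finset.mem_inter.mpr ⟨hmem', e2⟩
          rw [h2.vert_inter, Finset.mem_singleton] at this
          exact e3 (this ▸ h2.mid)
        refine ⟨e1, ?_, ?_, ?_, ?_⟩
        · rw [← h2.vert_union]; exact Finset.mem_union_right _ e2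
        · intro hEq; exact hsG (hEq ▸ e2)
        · rw [h2.tgt]; exact e4
        · rw [hsplit A.t, SignedGraph.degree_eq_zero hAH, e5]; omega
    · intro H0 hH0
      simp only [List.head?_cons, Option.some.injEq] at hH0
      subst hH0
      refine ⟨h2.src, ?_⟩
      rw [hsplit G0.s, SignedGraph.degree_eq_zero hsG, h2.src]; omega

/-- Master structural lemma for parallel connection lists: degree localization. -/
lemma gen_parallel {G : TTGraph} {l : List TTGraph} (h : IsParallelConnList G l) :
    ∀ H ∈ l, ∀ v ∈ H.verts, v ≠ H.s → v ≠ H.t →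
      G.toSignedGraph.degree v = H.toSignedGraph.degree v ∧ v ≠ G.s ∧ v ≠ G.t ∧ v ∈ G.verts := by
  induction h with
  | @two G0 H₁ H₂ h2 =>
    have hsplit := parallelConn2_degree_split h2
    intro H hH v hv hvs hvt
    simp only [List.mem_cons, List.not_mem_nil, or_false] at hH
    rcases hH with rfl | rfl
    · have hv2 : v ∉ H₂.verts := by
        intro hmem
        have : v ∈ H.verts ∩ H₂.verts := Finset.mem_inter.mpr ⟨hv, hmem⟩
        rw [h2.vert_inter, Finset.mem_insert, Finset.mem_singleton] at this
        rcases this with h | h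
        · exact hvs h
        · exact hvt h
      refine ⟨?_, ?_, ?_, ?_⟩
      · rw [hsplit v, SignedGraph.degree_eq_zero hv2]; omega
      · rw [h2.src]; exact hvs
      · rw [h2.tgt]; exact hvt
      · rw [← h2.vert_union]; exact Finset.mem_union_left _ hv
    · have hv1 : v ∉ H₁.verts := by
        intro hmem
        have : v ∈ H₁.verts ∩ H.verts := Finset.mem_inter.mpr ⟨hmem, hv⟩
        rw [h2.vert_inter, Finset.mem_insert, Finset.mem_singleton] at this
        rcases this with h | h
        · exact hvs (h.trans h2.src_eq)
        · exact hvt (h.trans h2.tgt_eq)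
      refine ⟨?_, ?_, ?_, ?_⟩
      · rw [hsplit v, SignedGraph.degree_eq_zero hv1]; omega
      · rw [h2.src, h2.src_eq]; exact hvs
      · rw [h2.tgt, h2.tgt_eq]; exact hvt
      · rw [← h2.vert_union]; exact Finset.mem_union_right _ hv
  | @cons G0 G'' H l h2 h' ih =>
    have hsplit := parallelConn2_degree_split h2
    intro H0 hH0 v hv hvs hvt
    rcases List.mem_cons.mp hH0 with rfl | hH0
    · have hv2 : v ∉ G''.verts := by
        intro hmem
        have : v ∈ H0.verts ∩ G''.verts := Finset.mem_inter.mpr ⟨hv, hmem⟩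
        rw [h2.vert_inter, Finset.mem_insert, Finset.mem_singleton] at this
        rcases this with h | h
        · exact hvs h
        · exact hvt h
      refine ⟨?_, ?_, ?_, ?_⟩
      · rw [hsplit v, SignedGraph.degree_eq_zero hv2]; omega
      · rw [h2.src]; exact hvs
      · rw [h2.tgt]; exact hvt
      · rw [← h2.vert_union]; exact Finset.mem_union_left _ hv
    · obtain ⟨hdeg, hs, ht, hmem⟩ := ih H0 hH0 v hv hvs hvt
      have hv1 : v ∉ H.verts := by
        intro hmem'
        have : v ∈ H.verts ∩ G''.verts := Finset.mem_inter.mpr ⟨hmem', hmem⟩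
        rw [h2.vert_inter, Finset.mem_insert, Finset.mem_singleton] at this
        rcases this with h | h
        · exact hs (h.trans h2.src_eq)
        · exact ht (h.trans h2.tgt_eq)
      refine ⟨?_, ?_, ?_, ?_⟩
      · rw [hsplit v, SignedGraph.degree_eq_zero hv1, hdeg]; omega
      · intro hEq; exact hs (by rw [hEq, h2.src, h2.src_eq])
      · intro hEq; exact ht (by rw [hEq, h2.tgt, h2.tgt_eq])
      · rw [← h2.vert_union]; exact Finset.mem_union_right _ hmem

end Aux3


section Aux4

open Finset

lemma depthLe_mono {G : TTGraph} {d : ℕ} (h : DepthLe G d) :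
    ∀ d', d ≤ d' → DepthLe G d' := by
  induction h with
  | k2 hk => exact fun d' _ => .k2 hk
  | @step G0 l d0 hp hd ih =>
    intro d' hle
    obtain ⟨e, rfl⟩ : ∃ e, d' = e + 1 := ⟨d' - 1, by omega⟩
    exact .step hp fun H hH => ih H hH e (by omega)

lemma depthLe_elim {G : TTGraph} {n : ℕ} (h : DepthLe G n) :
    IsSignedK2 G ∨ ∃ l, IsPartsOf G l ∧ ∃ m, n = m + 1 ∧ ∀ H ∈ l, DepthLe H m := by
  cases h with
  | k2 hk => exact Or.inl hk
  | step hp hd => exact Or.inr ⟨_, hp, _, rfl, hd⟩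

lemma depthLe_zero {G : TTGraph} (h : DepthLe G 0) : IsSignedK2 G := by
  rcases depthLe_elim h with hk | ⟨l, _, m, hm, _⟩
  · exact hk
  · omega

lemma depthLe_one {G : TTGraph} (h : DepthLe G 1) :
    IsSignedK2 G ∨ ∃ l, IsPartsOf G l ∧ ∀ H ∈ l, IsSignedK2 H := by
  rcases depthLe_elim h with hk | ⟨l, hp, m, hm, hd⟩
  · exact Or.inl hk
  · have : m = 0 := by omega
    subst this
    exact Or.inr ⟨l, hp, fun H hH => depthLe_zero (hd H hH)⟩

lemma depthLe_two {G : TTGraph} (h : DepthLe G 2) :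
    IsSignedK2 G ∨ ∃ l, IsPartsOf G l ∧ ∀ H ∈ l, DepthLe H 1 := by
  rcases depthLe_elim h with hk | ⟨l, hp, m, hm, hd⟩
  · exact Or.inl hk
  · have : m = 1 := by omega
    subst this
    exact Or.inr ⟨l, hp, hd⟩

lemma edges_card_le_two {G : TTGraph} (hred : IsReducedGraph G) {s t : ℕ} (hst : s ≠ t)
    {E : Finset ℕ} (hE : E ⊆ G.edges) (hJ : ∀ e ∈ E, G.toSignedGraph.Joins e s t) :
    E.card ≤ 2 := by
  by_contra hcon
  push_neg at hcon
  have hcard : (Finset.univ : Finset Bool).card < E.card := by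
    simp only [Finset.card_univ, Fintype.card_bool]
    omega
  obtain ⟨e, he, f, hf, hef, hsg⟩ :=
    Finset.exists_ne_map_eq_of_card_lt_of_maps_to hcard (fun a _ => Finset.mem_univ (G.sign a))
  exact hred.2 e (hE he) f (hE hf)
    (SignedGraph.joins_parallel hst hef (hJ e he) (hJ f hf)) hsg

lemma chain'_transfer {α : Type*} {R R' : α → α → Prop} {P : α → Prop} :
    ∀ l : List α, List.Chain' R l → (∀ a ∈ l, P a) →
      (∀ a b, P a → P b → R a b → R' a b) → List.Chain' R' l := by
  intro l
  induction l with
  | nil => intro _ _ _; exact List.isChain_nil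
  | cons a t ih =>
    intro hch hP himp
    cases t with
    | nil => exact List.isChain_singleton a
    | cons b t' =>
      unfold List.Chain' at hch ⊢
      rw [List.isChain_cons_cons] at hch ⊢
      refine ⟨himp a b (hP a (by simp)) (hP b (by simp)) hch.1, ?_⟩
      exact ih hch.2 (fun x hx => hP x (List.mem_cons_of_mem a hx)) himp

lemma d_in2cycle {H G : TTGraph} (hD : IsUnbalanced2Cycle H)
    (hsub : H.toSignedGraph.IsSubgraph G.toSignedGraph) {v : ℕ} (hv : v ∈ H.verts) :
    G.toSignedGraph.In2Cycle v := by
  obtain ⟨hverts, e, f, hef, hE, hje, hjf, _⟩ := hD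
  have he : e ∈ H.edges := by rw [hE]; simp
  have hf : f ∈ H.edges := by rw [hE]; simp
  have gje := SignedGraph.joins_sub hsub he hje
  have gjf := SignedGraph.joins_sub hsub hf hjf
  refine ⟨e, hsub.2.1 he, f, hsub.2.1 hf,
    SignedGraph.joins_parallel H.s_ne_t hef gje gjf,
    SignedGraph.joins_fst_ne_snd H.s_ne_t gje, ?_⟩
  rw [hverts, Finset.mem_insert, Finset.mem_singleton] at hv
  rcases gje with ⟨a, b⟩ | ⟨a, b⟩ <;> rcases hv with rfl | rfl
  · exact Or.inl a
  · exact Or.inr b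
  · exact Or.inr b
  · exact Or.inl a

lemma in2cycle_sub {H G : SignedGraph} (hsub : H.IsSubgraph G) {v : ℕ}
    (h : H.In2Cycle v) : G.In2Cycle v := by
  obtain ⟨e, he, f, hf, ⟨hef, hpar⟩, hne, hv⟩ := h
  obtain ⟨a1, a2, _⟩ := hsub.2.2 e he
  obtain ⟨b1, b2, _⟩ := hsub.2.2 f hf
  refine ⟨e, hsub.2.1 he, f, hsub.2.1 hf, ⟨hef, ?_⟩, ?_, ?_⟩ <;>
    rw [← a1, ← a2] <;> try rw [← b1, ← b2]
  · exact hpar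
  · exact hne
  · exact hv

lemma verts_pair_of_basic {H : TTGraph} (h : IsSignedK2 H ∨ IsUnbalanced2Cycle H) :
    H.verts = {H.s, H.t} := by
  rcases h with h | h
  · exact h.1
  · exact h.1

/-- Every internal vertex of a series connection of copies of `K₂` and `D`,
no two consecutive of which are both `K₂`, lies in a 2-cycle. -/
lemma in2_series {G : TTGraph} {l : List TTGraph} (h : IsSeriesConnList G l)
    (hparts : ∀ H ∈ l, IsSignedK2 H ∨ IsUnbalanced2Cycle H)
    (hch : List.Chain' (fun A B => IsUnbalanced2Cycle A ∨ IsUnbalanced2Cycle B) l) :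
    ∀ v ∈ G.verts, v ≠ G.s → v ≠ G.t → G.toSignedGraph.In2Cycle v := by
  induction h with
  | @two G0 H₁ H₂ h2 =>
    intro v hv hvs hvt
    rw [← h2.vert_union, Finset.mem_union] at hv
    have hv1 : v = H₁.t := by
      rcases hv with hv | hv
      · rw [verts_pair_of_basic (hparts H₁ (by simp)), Finset.mem_insert,
          Finset.mem_singleton] at hv
        rcases hv with rfl | rfl
        · exact absurd h2.src.symm hvs
        · rfl
      · rw [verts_pair_of_basic (hparts H₂ (by simp)), Finset.mem_insert,
          Finset.mem_singleton] at hv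
        rcases hv with rfl | rfl
        · exact h2.mid.symm
        · exact absurd h2.tgt.symm hvt
    subst hv1
    rcases (List.isChain_cons_cons.mp hch).1 with hD | hD
    · exact d_in2cycle hD h2.sub1 H₁.t_mem
    · exact d_in2cycle hD h2.sub2 (h2.mid ▸ H₂.s_mem)
  | @cons G0 G'' H l h2 h' ih =>
    intro v hv hvs hvt
    obtain ⟨A, t, rfl⟩ := seriesConnList_cons h'
    have hjunction : G0.toSignedGraph.In2Cycle H.t := by
      rcases (List.isChain_cons_cons.mp hch).1 with hD | hD
      · exact d_in2cycle hD h2.sub1 H.t_mem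
      · have hAs : G''.s = A.s := ((gen_series h').2.2 A rfl).1
        have hsubA : A.toSignedGraph.IsSubgraph G0.toSignedGraph :=
          SignedGraph.sub_trans (seriesConnList_sub h' A (by simp)) h2.sub2
        have : H.t ∈ A.verts := by rw [h2.mid, hAs]; exact A.s_mem
        exact d_in2cycle hD hsubA this
    rw [← h2.vert_union, Finset.mem_union] at hv
    rcases hv with hv | hv
    · rw [verts_pair_of_basic (hparts H (by simp)), Finset.mem_insert,
        Finset.mem_singleton] at hv
      rcases hv with rfl | rfl
      · exact absurd h2.src.symm hvs
      · exact hjunction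
    · rcases eq_or_ne v G''.s with rfl | hne
      · rw [← h2.mid]; exact hjunction
      · have hvt' : v ≠ G''.t := by rw [← h2.tgt]; exact hvt
        have := ih (fun H' hH' => hparts H' (List.mem_cons_of_mem H hH'))
          (List.isChain_cons_cons.mp hch).2 v hv hne hvt'
        exact in2cycle_sub h2.sub2 this

/-- Shape of a part of depth at most 1 of a reduced graph. -/
lemma part_shape {G H : TTGraph} (hred : IsReducedGraph G)
    (hsub : H.toSignedGraph.IsSubgraph G.toSignedGraph)
    (hloc : ∀ v ∈ H.verts, v ≠ H.s → v ≠ H.t →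
      G.toSignedGraph.degree v = H.toSignedGraph.degree v ∧ v ≠ G.s ∧ v ≠ G.t ∧ v ∈ G.verts)
    (hd : DepthLe H 1) : IsSignedK2 H ∨ IsUnbalanced2Cycle H := by
  rcases depthLe_one hd with hk | ⟨m, hparts, hK2⟩
  · exact Or.inl hk
  rcases hparts with ⟨hconn, -, -⟩ | ⟨hconn, -, -⟩
  · -- series of K₂'s: impossible in a reduced graph
    exfalso
    obtain ⟨A, B, t, rfl⟩ := seriesConnList_shape hconn
    obtain ⟨-, hgc, -⟩ := gen_series hconn
    obtain ⟨e1, e2, e3, e4, e5⟩ := (List.isChain_cons_cons.mp hgc).1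
    have dA : A.toSignedGraph.degree A.t = 1 := (k2_degree (hK2 A (by simp))).2
    have dB : B.toSignedGraph.degree B.s = 1 := (k2_degree (hK2 B (by simp))).1
    obtain ⟨hdeg, hs, ht, hmem⟩ := hloc A.t e2 e3 e4
    have := hred.1 A.t hmem hs ht
    rw [hdeg, e5, dA, dB] at this
    omega
  · -- parallel bundle of K₂'s: yields an unbalanced 2-cycle
    right
    have hterm := parallelConnList_terms hconn
    have hv : H.verts = {H.s, H.t} :=
      parallelConnList_verts hconn (fun A hA => (hK2 A hA).1)
    have hJ : ∀ e ∈ H.edges, H.toSignedGraph.Joins e H.s H.t := by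
      intro e he
      obtain ⟨A, hA, heA⟩ := parallelConnList_edge_mem hconn e he
      obtain ⟨-, e0, hE0, hj0⟩ := hK2 A hA
      rw [hE0, Finset.mem_singleton] at heA
      subst heA
      have := SignedGraph.joins_sub (parallelConnList_sub hconn A hA) (by rw [hE0]; simp) hj0
      rwa [(hterm A hA).1, (hterm A hA).2] at this
    have hJG : ∀ e ∈ H.edges, G.toSignedGraph.Joins e H.s H.t := fun e he =>
      SignedGraph.joins_sub hsub he (hJ e he)
    have hle : H.edges.card ≤ 2 := edges_card_le_two hred H.s_ne_t hsub.2.1 hJG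
    have hge : 2 ≤ H.edges.card := by
      obtain ⟨A, B, t, rfl⟩ := parallelConnList_shape hconn
      have := parallelConnList_card hconn (fun A hA => by
        obtain ⟨-, e0, hE0, -⟩ := hK2 A hA
        rw [hE0]; simp)
      simp only [List.length_cons] at this
      omega
    obtain ⟨e, f, hef, hEf⟩ := Finset.card_eq_two.mp (le_antisymm hle hge)
    have he : e ∈ H.edges := by rw [hEf]; simp
    have hf : f ∈ H.edges := by rw [hEf]; simp
    have hsg : G.sign e ≠ G.sign f := hred.2 e (hsub.2.1 he) f (hsub.2.1 hf)
      (SignedGraph.joins_parallel H.s_ne_t hef (hJG e he) (hJG f hf))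
    refine ⟨hv, e, f, hef, hEf, hJ e he, hJ f hf, ?_⟩
    rw [(hsub.2.2 e he).2.2, (hsub.2.2 f hf).2.2]
    exact hsg

end Aux4


section Aux5

open Finset

def condSet (b : Bool) (x : ℕ) : Finset ℕ := if b then {x} else ∅

lemma mem_condSet {b : Bool} {x y : ℕ} : y ∈ condSet b x ↔ b = true ∧ y = x := by
  cases b <;> simp [condSet]

lemma decide_eq_bool {p : Prop} [Decidable p] {b : Bool} (h : p ↔ b = true) : decide p = b := by
  cases b <;> simp [h]

lemma xor_cancel_aux : ∀ x σ : Bool, xor (xor x (xor x (!σ))) σ = true := by decide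

lemma k2_pos_of_decide {H : TTGraph} {S : Finset ℕ} (hK : IsSignedK2 H) {a b : Bool}
    (ha : H.s ∈ S ↔ a = true) (hb : H.t ∈ S ↔ b = true)
    (hx : ∀ e ∈ H.edges, xor (xor a b) (H.sign e) = true) :
    IsPositiveK2 (H.switchSet S) := by
  apply TTGraph.switchSet_k2_pos hK
  intro e he
  rw [decide_eq_bool ha, decide_eq_bool hb]
  exact hx e he

/-- Switching a series connection of copies of `K₂` and `D` so that every
part becomes a positive `K₂` or a `D`, with prescribed behaviour at the
source terminal. -/
lemma sw : ∀ {G : TTGraph} {l : List TTGraph}, IsSeriesConnList G l →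
    (∀ H ∈ l, IsSignedK2 H ∨ IsUnbalanced2Cycle H) → ∀ c : Bool,
    ∃ S : Finset ℕ, S ⊆ G.verts ∧ (G.s ∈ S ↔ c = true) ∧
      ∀ H ∈ l, IsPositiveK2 (H.switchSet S) ∨ IsUnbalanced2Cycle (H.switchSet S) := by
  intro G l h
  induction h with
  | @two G0 H₁ H₂ h2 =>
    intro hparts c
    have hw_mem : H₁.t ∈ G0.verts := by
      rw [← h2.vert_union]; exact Finset.mem_union_left _ H₁.t_mem
    have hs_ne_w : G0.s ≠ H₁.t := by rw [h2.src]; exact H₁.s_ne_t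
    have hw_ne_t : H₁.t ≠ G0.t := by rw [h2.tgt, h2.mid]; exact H₂.s_ne_t
    have hs_ne_t : G0.s ≠ G0.t := G0.s_ne_t
    have key : ∀ bw bt : Bool, ∃ S : Finset ℕ, S ⊆ G0.verts ∧ ((G0.s ∈ S) ↔ c = true) ∧
        ((H₁.t ∈ S) ↔ bw = true) ∧ ((G0.t ∈ S) ↔ bt = true) := by
      intro bw bt
      refine ⟨condSet c G0.s ∪ condSet bw H₁.t ∪ condSet bt G0.t, ?_, ?_, ?_, ?_⟩
      · intro x hx
        simp only [Finset.mem_union, mem_condSet] at hx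
        rcases hx with (⟨-, rfl⟩ | ⟨-, rfl⟩) | ⟨-, rfl⟩
        · exact G0.s_mem
        · exact hw_mem
        · exact G0.t_mem
      · simp [Finset.mem_union, mem_condSet, hs_ne_w, hs_ne_t]
      · simp [Finset.mem_union, mem_condSet, hs_ne_w.symm, hw_ne_t]
      · simp [Finset.mem_union, mem_condSet, hs_ne_t.symm, hw_ne_t.symm]
    have hmem1 : H₁ ∈ [H₁, H₂] := by simp
    have hmem2 : H₂ ∈ [H₁, H₂] := by simp
    rcases hparts H₁ hmem1 with ⟨hv1, e1, hE1, hj1⟩ | hD1 <;>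
      rcases hparts H₂ hmem2 with ⟨hv2, e2, hE2, hj2⟩ | hD2
    · obtain ⟨S, hsub, hms, hmw, hmt⟩ :=
        key (xor c (!(H₁.sign e1))) (xor (xor c (!(H₁.sign e1))) (!(H₂.sign e2)))
      refine ⟨S, hsub, hms, ?_⟩
      intro H hH
      simp only [List.mem_cons, List.not_mem_nil, or_false] at hH
      rcases hH with rfl | rfl
      · left
        refine k2_pos_of_decide ⟨hv1, e1, hE1, hj1⟩ (by rw [← h2.src]; exact hms) hmw ?_
        intro e' he'
        rw [hE1, Finset.mem_singleton] at he'
        subst he'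
        exact xor_cancel_aux c (H.sign e')
      · left
        refine k2_pos_of_decide ⟨hv2, e2, hE2, hj2⟩ (by rw [← h2.mid]; exact hmw)
          (by rw [← h2.tgt]; exact hmt) ?_
        intro e' he'
        rw [hE2, Finset.mem_singleton] at he'
        subst he'
        exact xor_cancel_aux (xor c (!(H₁.sign e1))) (H.sign e')
    · obtain ⟨S, hsub, hms, hmw, hmt⟩ := key (xor c (!(H₁.sign e1))) false
      refine ⟨S, hsub, hms, ?_⟩
      intro H hH
      simp only [List.mem_cons, List.not_mem_nil, or_false] at hH
      rcases hH with rfl | rfl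
      · left
        refine k2_pos_of_decide ⟨hv1, e1, hE1, hj1⟩ (by rw [← h2.src]; exact hms) hmw ?_
        intro e' he'
        rw [hE1, Finset.mem_singleton] at he'
        subst he'
        exact xor_cancel_aux c (H.sign e')
      · exact Or.inr (TTGraph.switchSet_d S hD2)
    · obtain ⟨S, hsub, hms, hmw, hmt⟩ := key false (xor false (!(H₂.sign e2)))
      refine ⟨S, hsub, hms, ?_⟩
      intro H hH
      simp only [List.mem_cons, List.not_mem_nil, or_false] at hH
      rcases hH with rfl | rfl
      · exact Or.inr (TTGraph.switchSet_d S hD1)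
      · left
        refine k2_pos_of_decide ⟨hv2, e2, hE2, hj2⟩ (by rw [← h2.mid]; exact hmw)
          (by rw [← h2.tgt]; exact hmt) ?_
        intro e' he'
        rw [hE2, Finset.mem_singleton] at he'
        subst he'
        exact xor_cancel_aux false (H.sign e')
    · obtain ⟨S, hsub, hms, hmw, hmt⟩ := key false false
      refine ⟨S, hsub, hms, ?_⟩
      intro H hH
      simp only [List.mem_cons, List.not_mem_nil, or_false] at hH
      rcases hH with rfl | rfl
      · exact Or.inr (TTGraph.switchSet_d S hD1)
      · exact Or.inr (TTGraph.switchSet_d S hD2)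
  | @cons G0 G'' H l h2 h' ih =>
    intro hparts c
    have htail : ∀ H' ∈ l, IsSignedK2 H' ∨ IsUnbalanced2Cycle H' := fun H' hH' =>
      hparts H' (List.mem_cons_of_mem H hH')
    have hsG : G0.s ∉ G''.verts := sconn2_s_not_mem h2
    have hGmem : ∀ x ∈ G''.verts, x ∈ G0.verts := by
      intro x hx; rw [← h2.vert_union]; exact Finset.mem_union_right _ hx
    rcases hparts H (by simp) with ⟨hv, e, hE, hj⟩ | hD
    · -- head is a K₂
      obtain ⟨S', hS'sub, hS's, hS'parts⟩ := ih htail (xor c (!(H.sign e)))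
      have hnsS' : G0.s ∉ S' := fun hx => hsG (hS'sub hx)
      refine ⟨S' ∪ condSet c G0.s, ?_, ?_, ?_⟩
      · intro x hx
        rcases Finset.mem_union.mp hx with hx | hx
        · exact hGmem x (hS'sub hx)
        · rcases mem_condSet.mp hx with ⟨-, rfl⟩; exact G0.s_mem
      · simp [Finset.mem_union, mem_condSet, hnsS']
      · intro H' hH'
        rcases List.mem_cons.mp hH' with rfl | hH'
        · left
          have hne : G''.s ≠ G0.s := fun hq => hsG (hq ▸ G''.s_mem)
          refine k2_pos_of_decide ⟨hv, e, hE, hj⟩ (a := c) (b := xor c (!(H'.sign e)))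
            (by rw [← h2.src]; simp [Finset.mem_union, mem_condSet, hnsS']) ?_ ?_
          · rw [h2.mid]
            simp [Finset.mem_union, mem_condSet, hne, hS's]
          · intro e' he'
            rw [hE, Finset.mem_singleton] at he'
            subst he'
            exact xor_cancel_aux c (H'.sign e')
        · have hagree : ∀ v ∈ H'.verts, (v ∈ S' ∪ condSet c G0.s ↔ v ∈ S') := by
            intro v hvm
            have hvG'' : v ∈ G''.verts := (seriesConnList_sub h' H' hH').1 hvm
            have hvne : v ≠ G0.s := fun hq => hsG (hq ▸ hvG'')
            simp [Finset.mem_union, mem_condSet, hvne]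
          exact TTGraph.switchSet_congr hagree (hS'parts H' hH')
    · -- head is a `D`
      obtain ⟨S', hS'sub, hS's, hS'parts⟩ := ih htail false
      have hnsS' : G0.s ∉ S' := fun hx => hsG (hS'sub hx)
      refine ⟨S' ∪ condSet c G0.s, ?_, ?_, ?_⟩
      · intro x hx
        rcases Finset.mem_union.mp hx with hx | hx
        · exact hGmem x (hS'sub hx)
        · rcases mem_condSet.mp hx with ⟨-, rfl⟩; exact G0.s_mem
      · simp [Finset.mem_union, mem_condSet, hnsS']
      · intro H' hH'
        rcases List.mem_cons.mp hH' with rfl | hH'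
        · exact Or.inr (TTGraph.switchSet_d _ hD)
        · have hagree : ∀ v ∈ H'.verts, (v ∈ S' ∪ condSet c G0.s ↔ v ∈ S') := by
            intro v hvm
            have hvG'' : v ∈ G''.verts := (seriesConnList_sub h' H' hH').1 hvm
            have hvne : v ≠ G0.s := fun hq => hsG (hq ▸ hvG'')
            simp [Finset.mem_union, mem_condSet, hvne]
          exact TTGraph.switchSet_congr hagree (hS'parts H' hH')

end Aux5

/-- Each reduced signed series-parallel graph of depth at
most 2 is switching equivalent to a string. -/
theorem reduced_depth_le_two_switch_equiv_string (G : TTGraph) (hSP : IsSP G)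
    (hred : IsReducedGraph G) (d : ℕ) (hd : HasDepth G d) (hd2 : d ≤ 2) :
    ∃ G' : TTGraph, SwitchEquiv G G' ∧ IsString G' := by
  have h2 : DepthLe G 2 := depthLe_mono hd.1 2 hd2
  rcases depthLe_two h2 with hk | ⟨l, hparts, hdl⟩
  · -- `G` is a signed `K₂`
    obtain ⟨hv, e, hE, hj⟩ := hk
    have hsubS : condSet (!(G.sign e)) G.s ⊆ G.verts := by
      intro x hx
      rcases mem_condSet.mp hx with ⟨-, rfl⟩
      exact G.s_mem
    refine ⟨G.switchSet (condSet (!(G.sign e)) G.s),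
      TTGraph.switchEquiv_switchSet G hsubS, Or.inl ?_, ?_⟩
    · refine k2_pos_of_decide ⟨hv, e, hE, hj⟩ (a := !(G.sign e)) (b := false)
        (by simp [mem_condSet]) (by simp [mem_condSet, (Ne.symm G.s_ne_t)]) ?_
      intro e' he'
      rw [hE, Finset.mem_singleton] at he'
      subst he'
      cases G.sign e' <;> rfl
    · intro v hv' hvs hvt
      rw [TTGraph.switchSet_verts, hv, Finset.mem_insert, Finset.mem_singleton] at hv'
      rcases hv' with rfl | rfl
      · exact absurd rfl hvs
      · exact absurd rfl hvt
  · rcases hparts with hser | hpar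
    · -- series type
      have hconn : IsSeriesConnList G l := hser.1
      obtain ⟨hLOC, hCH, -⟩ := gen_series hconn
      have hBasic : ∀ H ∈ l, IsSignedK2 H ∨ IsUnbalanced2Cycle H := fun H hH =>
        part_shape hred (seriesConnList_sub hconn H hH) (hLOC H hH) (hdl H hH)
      have hchD : List.Chain'
          (fun A B => IsUnbalanced2Cycle A ∨ IsUnbalanced2Cycle B) l := by
        refine chain'_transfer l hCH hBasic ?_
        rintro A B hA hB ⟨e1, e2, e3, e4, e5⟩
        rcases hA with hKA | hDA
        · rcases hB with hKB | hDB
          · exfalso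
            have := hred.1 A.t e2 e3 e4
            rw [e5, (k2_degree hKA).2, (k2_degree hKB).1] at this
            omega
          · exact Or.inr hDB
        · exact Or.inl hDA
      obtain ⟨S, hSsub, -, hSparts⟩ := sw hconn hBasic false
      refine ⟨G.switchSet S, TTGraph.switchEquiv_switchSet G hSsub,
        Or.inr (Or.inr ⟨l.map (fun H => H.switchSet S),
          TTGraph.switchSet_seriesConnList S hconn, ?_⟩), ?_⟩
      · intro H' hH'
        rw [List.mem_map] at hH'
        obtain ⟨H, hH, rfl⟩ := hH'
        exact hSparts H hH
      · intro v hv' hvs hvt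
        exact in2_series hconn hBasic hchD v hv' hvs hvt
    · -- parallel type
      have hconn : IsParallelConnList G l := hpar.1
      have hloc := gen_parallel hconn
      have hBasic : ∀ H ∈ l, IsSignedK2 H ∨ IsUnbalanced2Cycle H := fun H hH =>
        part_shape hred (parallelConnList_sub hconn H hH) (hloc H hH) (hdl H hH)
      have hJall : ∀ e ∈ G.edges, G.toSignedGraph.Joins e G.s G.t := by
        intro e he
        obtain ⟨H, hH, heH⟩ := parallelConnList_edge_mem hconn e he
        have hterm := parallelConnList_terms hconn H hH
        have hjH : H.toSignedGraph.Joins e H.s H.t := by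
          rcases hBasic H hH with ⟨hv0, e0, hE0, hj0⟩ | ⟨hv0, e0, f0, hne0, hE0, hj0, hjf0, -⟩
          · rw [hE0, Finset.mem_singleton] at heH
            rw [heH]; exact hj0
          · rw [hE0, Finset.mem_insert, Finset.mem_singleton] at heH
            rcases heH with rfl | rfl
            · exact hj0
            · exact hjf0
        have := SignedGraph.joins_sub (parallelConnList_sub hconn H hH) heH hjH
        rwa [hterm.1, hterm.2] at this
      have hle : G.edges.card ≤ 2 :=
        edges_card_le_two hred G.s_ne_t (Finset.Subset.refl _) hJall
      have hge : 2 ≤ G.edges.card := by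
        obtain ⟨A, B, t0, rfl⟩ := parallelConnList_shape hconn
        have hcl := parallelConnList_card hconn (fun H hH => by
          rcases hBasic H hH with ⟨-, e0, hE0, -⟩ | ⟨-, e0, f0, -, hE0, -⟩ <;>
            exact Finset.card_pos.mpr ⟨e0, by rw [hE0]; simp⟩)
        simp only [List.length_cons] at hcl
        omega
      obtain ⟨e, f, hef, hE⟩ := Finset.card_eq_two.mp (le_antisymm hle hge)
      have he : e ∈ G.edges := by rw [hE]; simp
      have hf : f ∈ G.edges := by rw [hE]; simp
      have hsg : G.sign e ≠ G.sign f := hred.2 e he f hf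
        (SignedGraph.joins_parallel G.s_ne_t hef (hJall e he) (hJall f hf))
      have hverts : G.verts = {G.s, G.t} :=
        parallelConnList_verts hconn (fun H hH => verts_pair_of_basic (hBasic H hH))
      refine ⟨G, Relation.ReflTransGen.refl,
        Or.inr (Or.inl ⟨hverts, e, f, hef, hE, hJall e he, hJall f hf, hsg⟩), ?_⟩
      intro v hv' hvs hvt
      rw [hverts, Finset.mem_insert, Finset.mem_singleton] at hv'
      rcases hv' with rfl | rfl
      · exact absurd rfl hvs
      · exact absurd rfl hvt
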